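/- Let ≺ be a strict well-order of ℕ whose order type λ is a limit ordinal. Work in the infinitary calculus over the signature (0,1,+,×,=) extended by a binary relation symbol for ≺, where the axiom rule (Ax) additionally admits finite sets Δ containing a true closed ≺-literal. Then for every pseudo-Π¹₁ formula φ(x) with exactly one free number variable, the truth-complexity of the transfinite induction formula TI(≺, φ) := (∀x((∀y(¬(y ≺ x) ∨ φ(y))) → φ(x))) → ∀x φ(x) (written in negation normal form) is at most λ + 2; that is, ⊢^{λ+2}_0 {TI(≺, φ)}. -/

import Mathlib

universe u

open Ordinal

/-- Terms of first-order arithmetic in the signature `(0, 1, +, ×)`, with (at most) `n`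
free variables, in de Bruijn representation. -/
inductive PTerm : ℕ → Type
  | var {n} : Fin n → PTerm n
  | zero {n} : PTerm n
  | one {n} : PTerm n
  | add {n} : PTerm n → PTerm n → PTerm n
  | mul {n} : PTerm n → PTerm n → PTerm n
  deriving DecidableEq

/-- Pseudo-Π¹₁ formulas (with at most `n` free number variables) in negation normal form:
built from literals of the signature `(0,1,+,×,=,≺)` (extended by a binary relation
symbol `≺`) and the atomic formulas `t ∈ X`, `t ∉ X`
for the single fixed set variable `X`, by `∧`, `∨`, `∀x`, `∃x` (de Bruijn representation). -/
inductive PForm : ℕ → Type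
  | eq {n} : PTerm n → PTerm n → PForm n
  | ne {n} : PTerm n → PTerm n → PForm n
  | mem {n} : PTerm n → PForm n
  | nmem {n} : PTerm n → PForm n
  | lt {n} : PTerm n → PTerm n → PForm n
  | nlt {n} : PTerm n → PTerm n → PForm n
  | and {n} : PForm n → PForm n → PForm n
  | or {n} : PForm n → PForm n → PForm n
  | all {n} : PForm (n + 1) → PForm n
  | ex {n} : PForm (n + 1) → PForm n
  deriving DecidableEq

namespace PTerm

/-- Evaluation of a term in the standard model `ℕ` under the environment `e`. -/
def val {n} (e : Fin n → ℕ) : PTerm n → ℕ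
  | var i => e i
  | zero => 0
  | one => 1
  | add s t => s.val e + t.val e
  | mul s t => s.val e * t.val e

/-- The value of a closed term in the standard model. -/
def val0 (t : PTerm 0) : ℕ := t.val Fin.elim0

/-- Simultaneous substitution in terms. -/
def subst {m n} (σ : Fin m → PTerm n) : PTerm m → PTerm n
  | var i => σ i
  | zero => zero
  | one => one
  | add s t => add (s.subst σ) (t.subst σ)
  | mul s t => mul (s.subst σ) (t.subst σ)

/-- Shift all free variables up by one. -/
def shift {n} (t : PTerm n) : PTerm (n + 1) := t.subst fun i => var i.succ

/-- The numeral `k̄` denoting the natural number `k`. -/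
def numeral {n} : ℕ → PTerm n
  | 0 => zero
  | k + 1 => add (numeral k) one

end PTerm

namespace PForm

/-- Negation, defined by De Morgan duality. -/
def neg {n} : PForm n → PForm n
  | eq s t => ne s t
  | ne s t => eq s t
  | mem t => nmem t
  | nmem t => mem t
  | lt s t => nlt s t
  | nlt s t => lt s t
  | and A B => or A.neg B.neg
  | or A B => and A.neg B.neg
  | all A => ex A.neg
  | ex A => all A.neg

/-- The rank of a formula: the number of logical symbols occurring in it. -/
def rk {n} : PForm n → ℕ
  | eq _ _ => 0
  | ne _ _ => 0
  | mem _ => 0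
  | nmem _ => 0
  | lt _ _ => 0
  | nlt _ _ => 0
  | and A B => A.rk + B.rk + 1
  | or A B => A.rk + B.rk + 1
  | all A => A.rk + 1
  | ex A => A.rk + 1

/-- Lift a substitution under a binder. -/
def liftSubst {m n} (σ : Fin m → PTerm n) : Fin (m + 1) → PTerm (n + 1) :=
  Fin.cases (PTerm.var 0) fun i => (σ i).shift

/-- Simultaneous substitution in formulas. -/
def subst : {m n : ℕ} → (Fin m → PTerm n) → PForm m → PForm n
  | _, _, σ, eq s t => eq (s.subst σ) (t.subst σ)
  | _, _, σ, ne s t => ne (s.subst σ) (t.subst σ)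
  | _, _, σ, mem t => mem (t.subst σ)
  | _, _, σ, nmem t => nmem (t.subst σ)
  | _, _, σ, lt s t => lt (s.subst σ) (t.subst σ)
  | _, _, σ, nlt s t => nlt (s.subst σ) (t.subst σ)
  | _, _, σ, and A B => and (A.subst σ) (B.subst σ)
  | _, _, σ, or A B => or (A.subst σ) (B.subst σ)
  | _, _, σ, all A => all (A.subst (liftSubst σ))
  | _, _, σ, ex A => ex (A.subst (liftSubst σ))

/-- `A.inst k` is `A(k̄)`: the result of substituting the numeral `k̄` for the free
variable of `A`. -/
def inst (A : PForm 1) (k : ℕ) : PForm 0 := A.subst fun _ => PTerm.numeral k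

/-- Truth of a pseudo-Π¹₁ formula in the standard model `ℕ`, with the set variable `X`
interpreted as `S` and the environment `e`. -/
def Sat (R : ℕ → ℕ → Prop) (S : Set ℕ) : {n : ℕ} → (Fin n → ℕ) → PForm n → Prop
  | _, e, eq s t => s.val e = t.val e
  | _, e, ne s t => s.val e ≠ t.val e
  | _, e, mem t => t.val e ∈ S
  | _, e, nmem t => t.val e ∉ S
  | _, e, lt s t => R (s.val e) (t.val e)
  | _, e, nlt s t => ¬ R (s.val e) (t.val e)
  | _, e, and A B => A.Sat R S e ∧ B.Sat R S e
  | _, e, or A B => A.Sat R S e ∨ B.Sat R S e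
  | _, e, all A => ∀ k : ℕ, A.Sat R S (Fin.cons k e)
  | _, e, ex A => ∃ k : ℕ, A.Sat R S (Fin.cons k e)

end PForm

/-- The infinitary (ω-logic) derivability relation `⊢^α_ρ Δ` for finite sets `Δ` of closed
pseudo-Π¹₁ formulas: derivations of height `α` with all cut formulas of rank `< ρ`. -/
inductive Der (R : ℕ → ℕ → Prop) : Ordinal.{u} → Ordinal.{u} → Finset (PForm 0) → Prop
  /-- (Ax): `Δ` contains a true closed literal of the first-order signature, or contains
  `s ∉ X` and `t ∈ X` for closed terms `s, t` with the same value. -/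
  | ax {α ρ Δ} :
      ((∃ s t : PTerm 0, (PForm.eq s t ∈ Δ ∧ s.val0 = t.val0) ∨
          (PForm.ne s t ∈ Δ ∧ s.val0 ≠ t.val0) ∨
          (PForm.lt s t ∈ Δ ∧ R s.val0 t.val0) ∨
          (PForm.nlt s t ∈ Δ ∧ ¬ R s.val0 t.val0)) ∨
        (∃ s t : PTerm 0, PForm.nmem s ∈ Δ ∧ PForm.mem t ∈ Δ ∧ s.val0 = t.val0)) →
      Der R α ρ Δ
  /-- (∧) -/
  | and {α α₁ α₂ ρ Δ} {A₁ A₂ : PForm 0} : Der R α₁ ρ (insert A₁ Δ) → Der R α₂ ρ (insert A₂ Δ) →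
      α₁ < α → α₂ < α → Der R α ρ (insert (PForm.and A₁ A₂) Δ)
  /-- (∨), left disjunct -/
  | orl {α α₀ ρ Δ} {A₁ A₂ : PForm 0} : Der R α₀ ρ (insert A₁ Δ) → α₀ < α →
      Der R α ρ (insert (PForm.or A₁ A₂) Δ)
  /-- (∨), right disjunct -/
  | orr {α α₀ ρ Δ} {A₁ A₂ : PForm 0} : Der R α₀ ρ (insert A₂ Δ) → α₀ < α →
      Der R α ρ (insert (PForm.or A₁ A₂) Δ)
  /-- (ω) -/
  | all {α ρ Δ} {A : PForm 1} (β : ℕ → Ordinal.{u}) : (∀ k : ℕ, β k < α) →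
      (∀ k : ℕ, Der R (β k) ρ (insert (A.inst k) Δ)) → Der R α ρ (insert (PForm.all A) Δ)
  /-- (∃) -/
  | ex {α α₀ ρ Δ} {A : PForm 1} (k : ℕ) : Der R α₀ ρ (insert (A.inst k) Δ) → α₀ < α →
      Der R α ρ (insert (PForm.ex A) Δ)
  /-- (Cut) -/
  | cut {α α₁ α₂ ρ Δ} {F : PForm 0} : Der R α₁ ρ (insert F Δ) → Der R α₂ ρ (insert F.neg Δ) →
      α₁ < α → α₂ < α → (F.rk : Ordinal) < ρ → Der R α ρ Δ

/-- The transfinite induction formula `TI(≺, φ)`, in negation normal form: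
`∃x ((∀y (¬(y ≺ x) ∨ φ(y))) ∧ ¬φ(x)) ∨ ∀x φ(x)`, i.e. the NNF of
`(∀x ((∀y (¬(y ≺ x) ∨ φ(y))) → φ(x))) → ∀x φ(x)`. -/
def TI (φ : PForm 1) : PForm 0 :=
  .or
    (.ex (.and
      (.all (.or (.nlt (.var 0) (.var 1)) (φ.subst fun _ => .var 0)))
      φ.neg))
    (.all φ)

section Aux

namespace PTerm

@[simp] lemma val_numeral {n} (e : Fin n → ℕ) (k : ℕ) : (numeral k).val e = k := by
  induction k with
  | zero => rfl
  | succ k ih => simp [numeral, val, ih]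

@[simp] lemma val0_numeral (k : ℕ) : (numeral k).val0 = k := val_numeral _ _

@[simp] lemma subst_numeral {m n} (σ : Fin m → PTerm n) (k : ℕ) :
    (numeral k).subst σ = numeral k := by
  induction k with
  | zero => rfl
  | succ k ih => simp [numeral, subst, ih]

lemma subst_subst {m n p} (σ : Fin m → PTerm n) (τ : Fin n → PTerm p) (t : PTerm m) :
    (t.subst σ).subst τ = t.subst (fun i => (σ i).subst τ) := by
  induction t with
  | var i => rfl
  | zero => rfl
  | one => rfl
  | add s t ihs iht => simp [subst, ihs, iht]
  | mul s t ihs iht => simp [subst, ihs, iht]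

lemma subst_var {n} (t : PTerm n) : t.subst PTerm.var = t := by
  induction t with
  | var i => rfl
  | zero => rfl
  | one => rfl
  | add s t ihs iht => simp [subst, ihs, iht]
  | mul s t ihs iht => simp [subst, ihs, iht]

end PTerm

namespace PForm

lemma shift_subst {n p} (τ : Fin n → PTerm p) (t : PTerm n) :
    (t.subst τ).shift = t.shift.subst (liftSubst τ) := by
  simp only [PTerm.shift, PTerm.subst_subst]
  congr 1

lemma liftSubst_var {n} : liftSubst (n := n) PTerm.var = PTerm.var := by
  funext j
  refine Fin.cases ?_ (fun i => ?_) j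
  · rfl
  · simp [liftSubst, PTerm.shift, PTerm.subst]

lemma liftSubst_comp {m n p} (σ : Fin m → PTerm n) (τ : Fin n → PTerm p) :
    liftSubst (fun i => (σ i).subst τ) = fun j => (liftSubst σ j).subst (liftSubst τ) := by
  funext j
  refine Fin.cases ?_ (fun i => ?_) j
  · simp [liftSubst, PTerm.subst]
  · simp [liftSubst, shift_subst]

lemma subst_subst {m} (A : PForm m) : ∀ {n p} (σ : Fin m → PTerm n) (τ : Fin n → PTerm p),
    (A.subst σ).subst τ = A.subst (fun i => (σ i).subst τ) := by
  induction A with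
  | eq s t => intro n p σ τ; simp [subst, PTerm.subst_subst]
  | ne s t => intro n p σ τ; simp [subst, PTerm.subst_subst]
  | mem t => intro n p σ τ; simp [subst, PTerm.subst_subst]
  | nmem t => intro n p σ τ; simp [subst, PTerm.subst_subst]
  | lt s t => intro n p σ τ; simp [subst, PTerm.subst_subst]
  | nlt s t => intro n p σ τ; simp [subst, PTerm.subst_subst]
  | and A B ihA ihB => intro n p σ τ; simp [subst, ihA, ihB]
  | or A B ihA ihB => intro n p σ τ; simp [subst, ihA, ihB]
  | all A ihA => intro n p σ τ; simp [subst, ihA, liftSubst_comp]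
  | ex A ihA => intro n p σ τ; simp [subst, ihA, liftSubst_comp]

lemma subst_var {n} (A : PForm n) : A.subst PTerm.var = A := by
  induction A with
  | eq s t => simp [subst, PTerm.subst_var]
  | ne s t => simp [subst, PTerm.subst_var]
  | mem t => simp [subst, PTerm.subst_var]
  | nmem t => simp [subst, PTerm.subst_var]
  | lt s t => simp [subst, PTerm.subst_var]
  | nlt s t => simp [subst, PTerm.subst_var]
  | and A B ihA ihB => simp [subst, ihA, ihB]
  | or A B ihA ihB => simp [subst, ihA, ihB]
  | all A ihA => simp [subst, liftSubst_var, ihA]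
  | ex A ihA => simp [subst, liftSubst_var, ihA]

lemma neg_subst {m} (A : PForm m) : ∀ {n} (σ : Fin m → PTerm n),
    (A.subst σ).neg = A.neg.subst σ := by
  induction A with
  | eq s t => intro n σ; rfl
  | ne s t => intro n σ; rfl
  | mem t => intro n σ; rfl
  | nmem t => intro n σ; rfl
  | lt s t => intro n σ; rfl
  | nlt s t => intro n σ; rfl
  | and A B ihA ihB => intro n σ; simp [subst, neg, ihA, ihB]
  | or A B ihA ihB => intro n σ; simp [subst, neg, ihA, ihB]
  | all A ihA => intro n σ; simp [subst, neg, ihA]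
  | ex A ihA => intro n σ; simp [subst, neg, ihA]

lemma rk_subst {m} (A : PForm m) : ∀ {n} (σ : Fin m → PTerm n), (A.subst σ).rk = A.rk := by
  induction A with
  | eq s t => intro n σ; rfl
  | ne s t => intro n σ; rfl
  | mem t => intro n σ; rfl
  | nmem t => intro n σ; rfl
  | lt s t => intro n σ; rfl
  | nlt s t => intro n σ; rfl
  | and A B ihA ihB => intro n σ; simp [subst, rk, ihA, ihB]
  | or A B ihA ihB => intro n σ; simp [subst, rk, ihA, ihB]
  | all A ihA => intro n σ; simp [subst, rk, ihA]
  | ex A ihA => intro n σ; simp [subst, rk, ihA]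

lemma rk_inst (A : PForm 1) (k : ℕ) : (A.inst k).rk = A.rk := rk_subst _ _

lemma neg_inst (A : PForm 1) (k : ℕ) : (A.inst k).neg = A.neg.inst k := neg_subst _ _

end PForm

/-- Weakening for the infinitary calculus. -/
lemma Der.mono {R : ℕ → ℕ → Prop} {α ρ : Ordinal} {Δ : Finset (PForm 0)}
    (h : Der R α ρ Δ) : ∀ {Δ' : Finset (PForm 0)}, Δ ⊆ Δ' → Der R α ρ Δ' := by
  induction h with
  | @ax α ρ Δ h =>
    intro Δ' hs
    refine Der.ax ?_
    rcases h with ⟨s, t, h⟩ | ⟨s, t, h1, h2, h3⟩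
    · refine Or.inl ⟨s, t, ?_⟩
      rcases h with ⟨h, e⟩ | ⟨h, e⟩ | ⟨h, e⟩ | ⟨h, e⟩
      · exact Or.inl ⟨hs h, e⟩
      · exact Or.inr (Or.inl ⟨hs h, e⟩)
      · exact Or.inr (Or.inr (Or.inl ⟨hs h, e⟩))
      · exact Or.inr (Or.inr (Or.inr ⟨hs h, e⟩))
    · exact Or.inr ⟨s, t, hs h1, hs h2, h3⟩
  | @and α α₁ α₂ ρ Δ A₁ A₂ h1 h2 ha1 ha2 ih1 ih2 =>
    intro Δ' hs
    have hF : PForm.and A₁ A₂ ∈ Δ' := hs (Finset.mem_insert_self _ _)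
    have hΔ : Δ ⊆ Δ' := (Finset.subset_insert _ _).trans hs
    have := Der.and (ih1 (Finset.insert_subset_insert _ hΔ))
      (ih2 (Finset.insert_subset_insert _ hΔ)) ha1 ha2
    rwa [Finset.insert_eq_self.mpr hF] at this
  | @orl α α₀ ρ Δ A₁ A₂ h1 ha ih =>
    intro Δ' hs
    have hF : PForm.or A₁ A₂ ∈ Δ' := hs (Finset.mem_insert_self _ _)
    have hΔ : Δ ⊆ Δ' := (Finset.subset_insert _ _).trans hs
    have := Der.orl (A₂ := A₂) (ih (Finset.insert_subset_insert _ hΔ)) ha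
    rwa [Finset.insert_eq_self.mpr hF] at this
  | @orr α α₀ ρ Δ A₁ A₂ h1 ha ih =>
    intro Δ' hs
    have hF : PForm.or A₁ A₂ ∈ Δ' := hs (Finset.mem_insert_self _ _)
    have hΔ : Δ ⊆ Δ' := (Finset.subset_insert _ _).trans hs
    have := Der.orr (A₁ := A₁) (ih (Finset.insert_subset_insert _ hΔ)) ha
    rwa [Finset.insert_eq_self.mpr hF] at this
  | @all α ρ Δ A β hβ h ih =>
    intro Δ' hs
    have hF : PForm.all A ∈ Δ' := hs (Finset.mem_insert_self _ _)
    have hΔ : Δ ⊆ Δ' := (Finset.subset_insert _ _).trans hs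
    have := Der.all β hβ (fun k => ih k (Finset.insert_subset_insert _ hΔ))
    rwa [Finset.insert_eq_self.mpr hF] at this
  | @ex α α₀ ρ Δ A k h1 ha ih =>
    intro Δ' hs
    have hF : PForm.ex A ∈ Δ' := hs (Finset.mem_insert_self _ _)
    have hΔ : Δ ⊆ Δ' := (Finset.subset_insert _ _).trans hs
    have := Der.ex k (ih (Finset.insert_subset_insert _ hΔ)) ha
    rwa [Finset.insert_eq_self.mpr hF] at this
  | @cut α α₁ α₂ ρ Δ F h1 h2 ha1 ha2 hrk ih1 ih2 =>
    intro Δ' hs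
    exact Der.cut (ih1 (Finset.insert_subset_insert _ hs))
      (ih2 (Finset.insert_subset_insert _ hs)) ha1 ha2 hrk

/-- Identity: `⊢^{2·rk F}_0 Δ ∪ {F, ¬F}`. -/
lemma Der.ident {R : ℕ → ℕ → Prop} :
    ∀ (N : ℕ) (F : PForm 0), F.rk ≤ N → ∀ Δ : Finset (PForm 0),
      Der R ((2 * F.rk : ℕ) : Ordinal) 0 (insert F (insert F.neg Δ)) := by
  intro N
  induction N using Nat.strong_induction_on with
  | _ N ih =>
  intro F hF Δ
  cases F with
  | eq s t =>
    refine Der.ax (Or.inl ⟨s, t, ?_⟩)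
    by_cases h : s.val0 = t.val0
    · exact Or.inl ⟨Finset.mem_insert_self _ _, h⟩
    · exact Or.inr (Or.inl ⟨Finset.mem_insert_of_mem (Finset.mem_insert_self _ _), h⟩)
  | ne s t =>
    refine Der.ax (Or.inl ⟨s, t, ?_⟩)
    by_cases h : s.val0 = t.val0
    · exact Or.inl ⟨Finset.mem_insert_of_mem (Finset.mem_insert_self _ _), h⟩
    · exact Or.inr (Or.inl ⟨Finset.mem_insert_self _ _, h⟩)
  | lt s t =>
    refine Der.ax (Or.inl ⟨s, t, ?_⟩)
    by_cases h : R s.val0 t.val0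
    · exact Or.inr (Or.inr (Or.inl ⟨Finset.mem_insert_self _ _, h⟩))
    · exact Or.inr (Or.inr (Or.inr
        ⟨Finset.mem_insert_of_mem (Finset.mem_insert_self _ _), h⟩))
  | nlt s t =>
    refine Der.ax (Or.inl ⟨s, t, ?_⟩)
    by_cases h : R s.val0 t.val0
    · exact Or.inr (Or.inr (Or.inl
        ⟨Finset.mem_insert_of_mem (Finset.mem_insert_self _ _), h⟩))
    · exact Or.inr (Or.inr (Or.inr ⟨Finset.mem_insert_self _ _, h⟩))
  | mem t =>
    exact Der.ax (Or.inr ⟨t, t, Finset.mem_insert_of_mem (Finset.mem_insert_self _ _),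
      Finset.mem_insert_self _ _, rfl⟩)
  | nmem t =>
    exact Der.ax (Or.inr ⟨t, t, Finset.mem_insert_self _ _,
      Finset.mem_insert_of_mem (Finset.mem_insert_self _ _), rfl⟩)
  | and A₁ A₂ =>
    simp only [PForm.rk, PForm.neg] at hF ⊢
    have hN : A₁.rk + A₂.rk < N := by omega
    refine Der.and (α₁ := ((2 * A₁.rk + 1 : ℕ) : Ordinal))
      (α₂ := ((2 * A₂.rk + 1 : ℕ) : Ordinal)) ?_ ?_ ?_ ?_
    · have h1 := ih (A₁.rk + A₂.rk) hN A₁ (by omega) Δ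
      have h2 : Der R ((2 * A₁.rk : ℕ) : Ordinal) 0
          (insert A₁.neg (insert A₁ Δ)) := h1.mono (by
        intro x hx; simp only [Finset.mem_insert] at hx ⊢; tauto)
      have h3 := Der.orl (A₂ := A₂.neg) h2 (Nat.cast_lt.mpr (Nat.lt_succ_self _))
      exact h3.mono (by intro x hx; simp only [Finset.mem_insert] at hx ⊢; tauto)
    · have h1 := ih (A₁.rk + A₂.rk) hN A₂ (by omega) Δ
      have h2 : Der R ((2 * A₂.rk : ℕ) : Ordinal) 0
          (insert A₂.neg (insert A₂ Δ)) := h1.mono (by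
        intro x hx; simp only [Finset.mem_insert] at hx ⊢; tauto)
      have h3 := Der.orr (A₁ := A₁.neg) h2 (Nat.cast_lt.mpr (Nat.lt_succ_self _))
      exact h3.mono (by intro x hx; simp only [Finset.mem_insert] at hx ⊢; tauto)
    · exact Nat.cast_lt.mpr (by omega)
    · exact Nat.cast_lt.mpr (by omega)
  | or A₁ A₂ =>
    simp only [PForm.rk, PForm.neg] at hF ⊢
    have hN : A₁.rk + A₂.rk < N := by omega
    have hmain : Der R ((2 * (A₁.rk + A₂.rk + 1) : ℕ) : Ordinal)
        (0 : Ordinal) (insert (PForm.and A₁.neg A₂.neg) (insert (PForm.or A₁ A₂) Δ)) := by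
      refine Der.and (α₁ := ((2 * A₁.rk + 1 : ℕ) : Ordinal))
        (α₂ := ((2 * A₂.rk + 1 : ℕ) : Ordinal)) ?_ ?_ ?_ ?_
      · have h1 := ih (A₁.rk + A₂.rk) hN A₁ (by omega) Δ
        have h2 : Der R ((2 * A₁.rk : ℕ) : Ordinal) 0
            (insert A₁ (insert A₁.neg Δ)) := h1
        have h3 := Der.orl (A₂ := A₂)
          (h2.mono (by intro x hx; simp only [Finset.mem_insert] at hx ⊢; tauto) :
            Der R ((2 * A₁.rk : ℕ) : Ordinal) 0 (insert A₁ (insert A₁.neg Δ)))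
          (Nat.cast_lt.mpr (Nat.lt_succ_self _))
        exact h3.mono (by intro x hx; simp only [Finset.mem_insert] at hx ⊢; tauto)
      · have h1 := ih (A₁.rk + A₂.rk) hN A₂ (by omega) Δ
        have h3 := Der.orr (A₁ := A₁)
          (h1.mono (by intro x hx; simp only [Finset.mem_insert] at hx ⊢; tauto) :
            Der R ((2 * A₂.rk : ℕ) : Ordinal) 0 (insert A₂ (insert A₂.neg Δ)))
          (Nat.cast_lt.mpr (Nat.lt_succ_self _))
        exact h3.mono (by intro x hx; simp only [Finset.mem_insert] at hx ⊢; tauto)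
      · exact Nat.cast_lt.mpr (by omega)
      · exact Nat.cast_lt.mpr (by omega)
    exact hmain.mono (by intro x hx; simp only [Finset.mem_insert] at hx ⊢; tauto)
  | all A =>
    simp only [PForm.rk, PForm.neg] at hF ⊢
    refine Der.all (β := fun _ => ((2 * A.rk + 1 : ℕ) : Ordinal)) ?_ ?_
    · intro k; exact Nat.cast_lt.mpr (by omega)
    · intro k
      have h1 := ih A.rk (by omega) (A.inst k) (le_of_eq (PForm.rk_inst A k)) Δ
      rw [PForm.rk_inst, PForm.neg_inst] at h1
      have h2 : Der R ((2 * A.rk : ℕ) : Ordinal) 0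
          (insert (A.neg.inst k) (insert (A.inst k) Δ)) :=
        h1.mono (by intro x hx; simp only [Finset.mem_insert] at hx ⊢; tauto)
      have h3 := Der.ex k h2 (Nat.cast_lt.mpr (Nat.lt_succ_self _))
      exact h3.mono (by intro x hx; simp only [Finset.mem_insert] at hx ⊢; tauto)
  | ex A =>
    simp only [PForm.rk, PForm.neg] at hF ⊢
    have hmain : Der R ((2 * (A.rk + 1) : ℕ) : Ordinal) (0 : Ordinal)
        (insert (PForm.all A.neg) (insert (PForm.ex A) Δ)) := by
      refine Der.all (β := fun _ => ((2 * A.rk + 1 : ℕ) : Ordinal)) ?_ ?_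
      · intro k; exact Nat.cast_lt.mpr (by omega)
      · intro k
        have h1 := ih A.rk (by omega) (A.inst k) (le_of_eq (PForm.rk_inst A k)) Δ
        rw [PForm.rk_inst, PForm.neg_inst] at h1
        have h2 : Der R ((2 * A.rk : ℕ) : Ordinal) 0
            (insert (A.inst k) (insert (A.neg.inst k) Δ)) :=
          h1.mono (by intro x hx; simp only [Finset.mem_insert] at hx ⊢; tauto)
        have h3 := Der.ex k h2 (Nat.cast_lt.mpr (Nat.lt_succ_self _))
        exact h3.mono (by intro x hx; simp only [Finset.mem_insert] at hx ⊢; tauto)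
    exact hmain.mono (by intro x hx; simp only [Finset.mem_insert] at hx ⊢; tauto)

lemma add_nat_lt_of_limit {l b : Ordinal} (hl : Order.IsSuccLimit l) (hb : b < l) (m : ℕ) :
    b + (m : Ordinal) < l := by
  induction m with
  | zero => simpa using hb
  | succ m ihm =>
    have h1 : b + ((m : Ordinal) + 1) = Order.succ (b + m) := by
      rw [← add_assoc, Ordinal.add_one_eq_succ]
    push_cast
    rw [h1]
    exact hl.succ_lt ihm

lemma four_mul_add_lt_of_limit {l b : Ordinal} (hl : Order.IsSuccLimit l) (hb : b < l) (k : ℕ) :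
    4 * b + (k : Ordinal) < l := by
  have hdm := Ordinal.div_add_mod b Ordinal.omega0
  have hrem : b % Ordinal.omega0 < Ordinal.omega0 := Ordinal.mod_lt b Ordinal.omega0_ne_zero
  obtain ⟨j, hj⟩ := Ordinal.lt_omega0.mp hrem
  have h4 : (4 : Ordinal) * b = Ordinal.omega0 * (b / Ordinal.omega0) + ((4 * j : ℕ) : Ordinal) := by
    conv_lhs => rw [← hdm]
    rw [mul_add, ← mul_assoc, hj]
    congr 1
    · congr 1
      exact Ordinal.mul_omega0 (by norm_num) (Ordinal.nat_lt_omega0 4)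
    · push_cast; ring_nf
  have hle : Ordinal.omega0 * (b / Ordinal.omega0) ≤ b :=
    le_of_le_of_eq (le_self_add) hdm
  calc 4 * b + (k : Ordinal)
      = Ordinal.omega0 * (b / Ordinal.omega0) + (((4 * j : ℕ) : Ordinal) + (k : Ordinal)) := by
        rw [h4, add_assoc]
    _ = Ordinal.omega0 * (b / Ordinal.omega0) + ((4 * j + k : ℕ) : Ordinal) := by
        push_cast
        ring_nf
    _ ≤ b + ((4 * j + k : ℕ) : Ordinal) := add_le_add_left hle _
    _ < l := add_nat_lt_of_limit hl hb _

lemma four_mul_step {a b : Ordinal} (h : a < b) {j k : ℕ} (hjk : j < k + 4) :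
    4 * a + (j : Ordinal) < 4 * b + (k : Ordinal) := by
  have h1 : a + 1 ≤ b := by rw [Ordinal.add_one_eq_succ]; exact Order.succ_le_of_lt h
  have h2 : (4 : Ordinal) * a + 4 ≤ 4 * b := by
    calc (4 : Ordinal) * a + 4 = 4 * (a + 1) := by rw [mul_add, mul_one]
      _ ≤ 4 * b := mul_le_mul_right h1 4
  calc 4 * a + (j : Ordinal) < 4 * a + ((4 : Ordinal) + (k : Ordinal)) := by
        refine add_lt_add_right ?_ _
        have : ((j : Ordinal)) < ((4 + k : ℕ) : Ordinal) := by exact_mod_cast (by omega : j < 4 + k)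
        simpa [Nat.cast_add] using this
    _ = (4 * a + 4) + (k : Ordinal) := by rw [add_assoc]
    _ ≤ 4 * b + (k : Ordinal) := add_le_add_left h2 _

lemma nat_lt_four_mul_add {a : Ordinal} {j k : ℕ} (hjk : j < k) :
    (j : Ordinal) < 4 * a + (k : Ordinal) := by
  calc (j : Ordinal) < (k : Ordinal) := by exact_mod_cast hjk
    _ ≤ 4 * a + (k : Ordinal) := le_add_self

namespace PForm

lemma inst_andB (φ : PForm 1) (n : ℕ) :
    (PForm.and (.all (.or (.nlt (.var 0) (.var 1)) (φ.subst fun _ => .var 0))) φ.neg).inst n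
      = .and (.all (.or (.nlt (.var 0) (.numeral n)) φ)) ((φ.inst n).neg) := by
  simp only [inst, subst, PTerm.subst]
  refine congrArg₂ _ (congrArg _ (congrArg₂ _ ?_ ?_)) ?_
  · -- nlt part
    have h0 : liftSubst (fun _ : Fin 1 => (PTerm.numeral n : PTerm 0)) 0 = PTerm.var 0 := rfl
    have h1 : liftSubst (fun _ : Fin 1 => (PTerm.numeral n : PTerm 0)) 1 = PTerm.numeral n := by
      show (PTerm.numeral n).shift = PTerm.numeral n
      simp [PTerm.shift]
    rw [h0, h1]
  · -- φ part
    rw [subst_subst]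
    have : (fun i : Fin 1 => ((fun _ : Fin 1 => (PTerm.var 0 : PTerm 2)) i).subst
        (liftSubst fun _ : Fin 1 => (PTerm.numeral n : PTerm 0))) = PTerm.var := by
      funext i
      have : i = 0 := Subsingleton.elim _ _
      subst this
      rfl
    rw [this, subst_var]
  · exact (neg_subst φ _).symm

lemma inst_D (φ : PForm 1) (n m : ℕ) :
    (PForm.or (.nlt (.var 0) (.numeral n)) φ).inst m
      = .or (.nlt (.numeral m) (.numeral n)) (φ.inst m) := by
  simp only [inst, subst, PTerm.subst, PTerm.subst_numeral]

end PForm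

lemma four_mul_add_lt {a : Ordinal} {j k : ℕ} (h : j < k) :
    4 * a + (j : Ordinal) < 4 * a + (k : Ordinal) :=
  add_lt_add_right (by exact_mod_cast h) _

end Aux


private def tiB (φ : PForm 1) : PForm 1 :=
  .all (.or (.nlt (.var 0) (.var 1)) (φ.subst fun _ => .var 0))

private def tiC (φ : PForm 1) : PForm 0 := .ex (.and (tiB φ) φ.neg)

private lemma TI_eq (φ : PForm 1) : TI φ = .or (tiC φ) (.all φ) := rfl

private lemma inst_andB' (φ : PForm 1) (n : ℕ) :
    (PForm.and (tiB φ) φ.neg).inst n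
      = .and (.all (.or (.nlt (.var 0) (.numeral n)) φ)) ((φ.inst n).neg) :=
  PForm.inst_andB φ n

private lemma key_lemma (r : ℕ → ℕ → Prop) [IsWellOrder ℕ r] (φ : PForm 1) :
    ∀ n : ℕ, Der r (4 * Ordinal.typein r n + ((2 * φ.rk + 4 : ℕ) : Ordinal)) 0
      (insert (tiC φ) {φ.inst n}) := by
  classical
  have wf : WellFounded r := IsWellFounded.wf
  have step : ∀ n : ℕ,
      (∀ m : ℕ, r m n → Der r (4 * Ordinal.typein r m + ((2 * φ.rk + 4 : ℕ) : Ordinal)) 0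
        (insert (tiC φ) {φ.inst m})) →
      Der r (4 * Ordinal.typein r n + ((2 * φ.rk + 4 : ℕ) : Ordinal)) 0
        (insert (tiC φ) {φ.inst n}) := by
    intro n ih
    have hGC : insert (tiC φ) (insert (tiC φ) ({φ.inst n} : Finset (PForm 0)))
        = insert (tiC φ) {φ.inst n} := Finset.insert_idem _ _
    rw [← hGC]
    show Der r _ 0 (insert (PForm.ex (PForm.and (tiB φ) φ.neg))
      (insert (tiC φ) ({φ.inst n} : Finset (PForm 0))))
    refine Der.ex (α₀ := 4 * Ordinal.typein r n + ((2 * φ.rk + 3 : ℕ) : Ordinal)) n ?_ ?_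
    · -- the conjunction
      rw [inst_andB']
      refine Der.and (α₁ := 4 * Ordinal.typein r n + ((2 * φ.rk + 2 : ℕ) : Ordinal))
        (α₂ := ((2 * φ.rk : ℕ) : Ordinal)) ?_ ?_ ?_ ?_
      · -- the ∀y(y ⊀ n̄ ∨ φ(y)) part
        refine Der.all (β := fun m => if r m n
            then 4 * Ordinal.typein r m + ((2 * φ.rk + 5 : ℕ) : Ordinal)
            else ((1 : ℕ) : Ordinal)) ?_ ?_
        · intro m
          by_cases hm : r m n
          · rw [if_pos hm]
            exact four_mul_step ((Ordinal.typein_lt_typein r).mpr hm) (by omega)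
          · rw [if_neg hm]
            exact nat_lt_four_mul_add (by omega)
        · intro m
          rw [PForm.inst_D]
          by_cases hm : r m n
          · rw [if_pos hm]
            refine Der.orr (α₀ := 4 * Ordinal.typein r m + ((2 * φ.rk + 4 : ℕ) : Ordinal))
              ?_ ?_
            · exact (ih m hm).mono (by
                intro x hx
                simp only [Finset.mem_insert, Finset.mem_singleton] at hx ⊢; tauto)
            · exact four_mul_add_lt (by omega)
          · rw [if_neg hm]
            refine Der.orl (α₀ := (0 : Ordinal)) ?_ ?_
            · refine Der.ax (Or.inl ⟨PTerm.numeral m, PTerm.numeral n, ?_⟩)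
              refine Or.inr (Or.inr (Or.inr ⟨Finset.mem_insert_self _ _, ?_⟩))
              simpa using hm
            · exact_mod_cast Nat.zero_lt_one
      · -- the ¬φ(n̄) part
        have h1 := Der.ident (R := r) (φ.inst n).rk (φ.inst n) le_rfl
          ({tiC φ} : Finset (PForm 0))
        rw [PForm.rk_inst] at h1
        exact h1.mono (by
          intro x hx
          simp only [Finset.mem_insert, Finset.mem_singleton] at hx ⊢; tauto)
      · exact four_mul_add_lt (by omega)
      · calc ((2 * φ.rk : ℕ) : Ordinal)
            ≤ 4 * Ordinal.typein r n + ((2 * φ.rk : ℕ) : Ordinal) := le_add_self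
          _ < 4 * Ordinal.typein r n + ((2 * φ.rk + 3 : ℕ) : Ordinal) := by
              refine add_lt_add_right ?_ _
              exact Nat.cast_lt.mpr (by omega)
    · exact four_mul_add_lt (by omega)
  exact fun n => wf.induction n step


/-- Theorem 4.4 / Proposition 4.5; Pohlers, Theorem 1.3.10.
Let `≺` be a strict well-order of `ℕ` whose order type `λ` is a limit ordinal.  In the
infinitary calculus over the signature extended by `≺`, for every pseudo-Π¹₁ formula
`φ(x)` with one free number variable, the truth-complexity of `TI(≺, φ)` is at most
`λ + 2`, i.e. `⊢^{λ+2}_0 {TI(≺, φ)}`. -/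
theorem tc_TI_le (r : ℕ → ℕ → Prop) [IsWellOrder ℕ r]
    (hlim : Order.IsSuccLimit (Ordinal.type r)) (φ : PForm 1) :
    Der r (Ordinal.type r + 2) 0 {TI φ} := by
  classical
  have hall : Der r (Ordinal.type r) 0
      (insert (PForm.all φ) ({tiC φ} : Finset (PForm 0))) := by
    refine Der.all (β := fun k => 4 * Ordinal.typein r k + ((2 * φ.rk + 4 : ℕ) : Ordinal)) ?_ ?_
    · intro k
      exact four_mul_add_lt_of_limit hlim (Ordinal.typein_lt_type r k) _
    · intro k
      exact (key_lemma r φ k).mono (by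
        intro x hx
        simp only [Finset.mem_insert, Finset.mem_singleton] at hx ⊢; tauto)
  have h1 : Der r (Ordinal.type r + 1) 0 (insert (TI φ) ({tiC φ} : Finset (PForm 0))) := by
    rw [TI_eq]
    exact Der.orr hall (by
      rw [Ordinal.add_one_eq_succ]; exact Order.lt_succ _)
  have h2 : Der r (Ordinal.type r + 2) 0 (insert (TI φ) ({TI φ} : Finset (PForm 0))) := by
    rw [TI_eq]
    refine Der.orl (α₀ := Ordinal.type r + 1) ?_ ?_
    · refine h1.mono ?_
      rw [TI_eq]
      intro x hx
      simp only [Finset.mem_insert, Finset.mem_singleton] at hx ⊢; tauto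
    · exact add_lt_add_right (by norm_num) _
  have hself : insert (TI φ) ({TI φ} : Finset (PForm 0)) = {TI φ} :=
    Finset.insert_eq_self.mpr (Finset.mem_singleton_self _)
  rwa [hself] at h2
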